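/- arXiv:1312.5861 — 3 statements merged into one kernel-verified Lean document; each statement's English description precedes it below -/
import Mathlib

section
/- Material derivative of the unit normal: let Γ = φ⁻¹(0) be a compact C² hypersurface in ℝ^d with unit normal n = ∇φ/|∇φ|, let V ∈ C_c²(ℝ^d;ℝ^d) satisfy V = (V·n)n on Γ, and for small t let n_t = ∇φ_t/|∇φ_t| with φ_t = φ∘T_t^{-1} be the unit normal of the transported hypersurface Γ_t = T_t(Γ). Then for every x ∈ Γ, the material derivative of the normal satisfies d/dt n_t(T_t(x)) |_{t=0} = −∇_Γ(V·n)(x), where ∇_Γ is the tangential gradient on Γ. -/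
open MeasureTheory RealInnerProductSpace

noncomputable section
set_option maxHeartbeats 2000000

/-- The divergence of a vector field on `ℝ^d`. -/
def divg {d : ℕ} (W : EuclideanSpace ℝ (Fin d) → EuclideanSpace ℝ (Fin d))
    (x : EuclideanSpace ℝ (Fin d)) : ℝ :=
  ∑ i, fderiv ℝ W x (EuclideanSpace.single i 1) i

/-- The unit normal field `∇φ/|∇φ|` of the level set of `φ`. -/
def nrm {d : ℕ} (φ : EuclideanSpace ℝ (Fin d) → ℝ) (x : EuclideanSpace ℝ (Fin d)) :
    EuclideanSpace ℝ (Fin d) :=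
  ‖gradient φ x‖⁻¹ • gradient φ x

/-- The tangential gradient `∇_Γ f = ∇f − (∇f·n)n` relative to a normal field `n`. -/
def tgrad {d : ℕ} (n : EuclideanSpace ℝ (Fin d) → EuclideanSpace ℝ (Fin d))
    (f : EuclideanSpace ℝ (Fin d) → ℝ) (x : EuclideanSpace ℝ (Fin d)) :
    EuclideanSpace ℝ (Fin d) :=
  gradient f x - ⟪gradient f x, n x⟫ • n x

/-- The tangential divergence `div_Γ W = div W − (DW n)·n` relative to a normal field `n`. -/
def tdiv {d : ℕ} (n W : EuclideanSpace ℝ (Fin d) → EuclideanSpace ℝ (Fin d))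
    (x : EuclideanSpace ℝ (Fin d)) : ℝ :=
  divg W x - ⟪fderiv ℝ W x (n x), n x⟫

/-- The additive curvature `K = div_Γ n`. -/
def addK {d : ℕ} (n : EuclideanSpace ℝ (Fin d) → EuclideanSpace ℝ (Fin d))
    (x : EuclideanSpace ℝ (Fin d)) : ℝ :=
  tdiv n n x

/-- Derivative of the normalization of a nonvanishing curve. -/
lemma hasDerivAt_normalize {E : Type*} [NormedAddCommGroup E] [InnerProductSpace ℝ E]
    {g : ℝ → E} {g' : E} (hg : HasDerivAt g g' 0) (h0 : g 0 ≠ 0) :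
    HasDerivAt (fun t => ‖g t‖⁻¹ • g t)
      (‖g 0‖⁻¹ • g' - ((‖g 0‖ ^ 3)⁻¹ * ⟪g 0, g'⟫) • g 0) 0 := by
  have hq : HasDerivAt (fun t => ⟪g t, g t⟫) (⟪g 0, g'⟫ + ⟪g', g 0⟫) 0 := hg.inner ℝ hg
  have hq0 : ⟪g 0, g 0⟫ ≠ 0 := by
    simpa [real_inner_self_eq_norm_mul_norm] using
      mul_ne_zero (norm_ne_zero_iff.2 h0) (norm_ne_zero_iff.2 h0)
  have hs : HasDerivAt (fun t => Real.sqrt ⟪g t, g t⟫)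
      ((⟪g 0, g'⟫ + ⟪g', g 0⟫) / (2 * Real.sqrt ⟪g 0, g 0⟫)) 0 := hq.sqrt hq0
  have hsr : ∀ t, Real.sqrt ⟪g t, g t⟫ = ‖g t‖ := by
    intro t
    rw [real_inner_self_eq_norm_mul_norm, Real.sqrt_mul_self (norm_nonneg _)]
  have hs0 : Real.sqrt ⟪g 0, g 0⟫ ≠ 0 := by rw [hsr]; exact norm_ne_zero_iff.2 h0
  have hinv := (hs.inv hs0).smul hg
  have heq : (fun t => (Real.sqrt ⟪g t, g t⟫)⁻¹ • g t) = fun t => ‖g t‖⁻¹ • g t := by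
    funext t; rw [hsr]
  change HasDerivAt (fun t => (Real.sqrt ⟪g t, g t⟫)⁻¹ • g t) ((Real.sqrt ⟪g 0, g 0⟫)⁻¹ • g' + (-((⟪g 0, g'⟫ + ⟪g', g 0⟫) / (2 * Real.sqrt ⟪g 0, g 0⟫)) / Real.sqrt ⟪g 0, g 0⟫ ^ 2) • g 0) 0 at hinv
  rw [heq] at hinv
  convert hinv using 1
  rw [hsr 0]
  have hn0 : ‖g 0‖ ≠ 0 := norm_ne_zero_iff.2 h0
  rw [real_inner_comm g' (g 0), sub_eq_add_neg]
  congr 1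
  rw [← neg_smul]
  congr 1
  field_simp
  ring

/-- material derivative of the unit normal. Let `Γ = φ⁻¹(0)` be a compact
`C²` hypersurface with unit normal `n = ∇φ/|∇φ|`, `V ∈ C_c²` with `V = (V·n)n` on `Γ`,
`T_t(x) = x + tV(x)` with inverse family `S t`, and `n_t = ∇φ_t/|∇φ_t|` with `φ_t = φ ∘ S t`
the unit normal of `Γ_t = T_t(Γ)`. Then for `x ∈ Γ`,
`d/dt n_t(T_t(x))|_{t=0} = −∇_Γ(V·n)(x)`. -/
theorem stmt_5 {d : ℕ} (φ : EuclideanSpace ℝ (Fin d) → ℝ) (hφ : ContDiff ℝ 2 φ)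
    (hcpt : IsCompact (φ ⁻¹' {0}))
    (hgrad : ∀ x ∈ φ ⁻¹' {0}, gradient φ x ≠ 0)
    (V : EuclideanSpace ℝ (Fin d) → EuclideanSpace ℝ (Fin d))
    (hV : ContDiff ℝ 2 V) (hVc : HasCompactSupport V)
    (hVn : ∀ x ∈ φ ⁻¹' {0}, V x = ⟪V x, nrm φ x⟫ • nrm φ x)
    (δ : ℝ) (hδ : 0 < δ)
    (S : ℝ → EuclideanSpace ℝ (Fin d) → EuclideanSpace ℝ (Fin d))
    (hS : ∀ t ∈ Set.Ioo (-δ) δ,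
      Function.LeftInverse (S t) (fun x => x + t • V x)
        ∧ Function.RightInverse (S t) (fun x => x + t • V x))
    (x : EuclideanSpace ℝ (Fin d)) (hx : x ∈ φ ⁻¹' {0}) :
    HasDerivAt (fun t => nrm (φ ∘ S t) (x + t • V x))
      (-(tgrad (nrm φ) (fun y => ⟪V y, nrm φ y⟫) x)) 0 := by
  classical
  set A := fderiv ℝ V x with hA
  set A' := ContinuousLinearMap.adjoint A with hA'
  set w := gradient φ x with hwdef
  have hw : w ≠ 0 := hgrad x hx
  have hwn : ‖w‖ ≠ 0 := norm_ne_zero_iff.2 hw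
  have hφd : Differentiable ℝ φ := hφ.differentiable two_ne_zero
  have hVd : Differentiable ℝ V := hV.differentiable two_ne_zero
  obtain ⟨L, hL⟩ := hV.lipschitzWith_of_hasCompactSupport hVc two_ne_zero
  set g : ℝ → EuclideanSpace ℝ (Fin d) :=
    fun t => Ring.inverse ((1 : EuclideanSpace ℝ (Fin d) →L[ℝ] EuclideanSpace ℝ (Fin d))
      + t • A') w with hgdef
  -- ### Step A : eventual equality with the explicit formula
  have hA_eq : ∀ᶠ t in nhds (0 : ℝ),
      nrm (φ ∘ S t) (x + t • V x) = ‖g t‖⁻¹ • g t := by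
    have hApos : (0 : ℝ) < ‖A‖ + 1 := by positivity
    have hLpos : (0 : ℝ) < 2 * ((L : ℝ) + 1) := by positivity
    have hεpos : 0 < min δ (min (‖A‖ + 1)⁻¹ (2 * ((L : ℝ) + 1))⁻¹) := by positivity
    filter_upwards [Metric.ball_mem_nhds (0 : ℝ) hεpos] with t ht
    rw [Metric.mem_ball, Real.dist_eq, sub_zero, lt_min_iff, lt_min_iff] at ht
    obtain ⟨htδ, htA, htL⟩ := ht
    have ht1 : t ∈ Set.Ioo (-δ) δ := by
      rw [Set.mem_Ioo]
      constructor <;> [linarith [abs_lt.1 htδ |>.1]; exact (abs_lt.1 htδ).2]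
    have hsm : ‖t • A‖ < 1 := by
      calc ‖t • A‖ = |t| * ‖A‖ := by rw [norm_smul, Real.norm_eq_abs]
        _ ≤ |t| * (‖A‖ + 1) := by nlinarith [abs_nonneg t]
        _ < (‖A‖ + 1)⁻¹ * (‖A‖ + 1) := by exact mul_lt_mul_of_pos_right htA hApos
        _ = 1 := inv_mul_cancel₀ hApos.ne'
    have htL' : |t| * (L : ℝ) ≤ 1 / 2 := by
      have h1 : |t| * (L : ℝ) ≤ |t| * ((L : ℝ) + 1) := by nlinarith [abs_nonneg t]
      have h2 : |t| * ((L : ℝ) + 1) < (2 * ((L : ℝ) + 1))⁻¹ * ((L : ℝ) + 1) :=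
        mul_lt_mul_of_pos_right htL (by positivity)
      have h3 : (2 * ((L : ℝ) + 1))⁻¹ * ((L : ℝ) + 1) = 1 / 2 := by
        field_simp
      linarith
    -- continuity (Lipschitz bound) of `S t`
    have hSlip : LipschitzWith 2 (S t) := by
      apply LipschitzWith.of_dist_le_mul
      intro y₁ y₂
      set a := S t y₁ with ha
      set b := S t y₂ with hb
      have hy₁ : a + t • V a = y₁ := (hS t ht1).2 y₁
      have hy₂ : b + t • V b = y₂ := (hS t ht1).2 y₂
      have hab : a - b = (y₁ - y₂) - t • (V a - V b) := by
        rw [← hy₁, ← hy₂]; module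
      have h1 : ‖a - b‖ ≤ ‖y₁ - y₂‖ + ‖t • (V a - V b)‖ := by
        rw [hab]; exact norm_sub_le _ _
      have h2 : ‖t • (V a - V b)‖ = |t| * ‖V a - V b‖ := by
        rw [norm_smul, Real.norm_eq_abs]
      have h3 : ‖V a - V b‖ ≤ (L : ℝ) * ‖a - b‖ := by
        have := hL.dist_le_mul a b
        rwa [dist_eq_norm, dist_eq_norm] at this
      have h4 : |t| * ‖V a - V b‖ ≤ (1 / 2) * ‖a - b‖ := by
        calc |t| * ‖V a - V b‖ ≤ |t| * ((L : ℝ) * ‖a - b‖) := by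
              apply mul_le_mul_of_nonneg_left h3 (abs_nonneg t)
          _ = (|t| * (L : ℝ)) * ‖a - b‖ := by ring
          _ ≤ (1 / 2) * ‖a - b‖ := by
              apply mul_le_mul_of_nonneg_right htL' (norm_nonneg _)
      have : ‖a - b‖ ≤ 2 * ‖y₁ - y₂‖ := by
        rw [h2] at h1; linarith
      calc dist (S t y₁) (S t y₂) = ‖a - b‖ := by rw [dist_eq_norm]
        _ ≤ 2 * ‖y₁ - y₂‖ := this
        _ = (2 : NNReal) * dist y₁ y₂ := by rw [dist_eq_norm]; norm_num
    -- derivative of `T t` and its inverse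
    set u : (EuclideanSpace ℝ (Fin d) →L[ℝ] EuclideanSpace ℝ (Fin d))ˣ :=
      Units.oneSub (-(t • A)) (by rwa [norm_neg]) with hu
    have huval : (u : EuclideanSpace ℝ (Fin d) →L[ℝ] EuclideanSpace ℝ (Fin d))
        = 1 + t • A := by
      rw [hu, Units.val_oneSub, sub_neg_eq_add]
    set e : EuclideanSpace ℝ (Fin d) ≃L[ℝ] EuclideanSpace ℝ (Fin d) :=
      ContinuousLinearEquiv.ofUnit u with he
    have hTd : HasFDerivAt (fun y => y + t • V y)
        ((e : EuclideanSpace ℝ (Fin d) →L[ℝ] EuclideanSpace ℝ (Fin d))) x := by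
      have h1 : HasFDerivAt (fun y : EuclideanSpace ℝ (Fin d) => y + t • V y)
          ((ContinuousLinearMap.id ℝ (EuclideanSpace ℝ (Fin d))) + t • A) x :=
        (hasFDerivAt_id x).add ((hVd.differentiableAt.hasFDerivAt).const_smul t)
      have h2 : (e : EuclideanSpace ℝ (Fin d) →L[ℝ] EuclideanSpace ℝ (Fin d))
          = ContinuousLinearMap.id ℝ (EuclideanSpace ℝ (Fin d)) + t • A := by
        show (u : EuclideanSpace ℝ (Fin d) →L[ℝ] EuclideanSpace ℝ (Fin d)) = _
        rw [huval]; rfl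
      rwa [h2]
    have hSx : S t (x + t • V x) = x := (hS t ht1).1 x
    have hSd : HasFDerivAt (S t)
        ((e.symm : EuclideanSpace ℝ (Fin d) →L[ℝ] EuclideanSpace ℝ (Fin d)))
        (x + t • V x) := by
      apply HasFDerivAt.of_local_left_inverse hSlip.continuous.continuousAt (by rwa [hSx])
      exact Filter.Eventually.of_forall (hS t ht1).2
    have hcomp : HasFDerivAt (φ ∘ S t)
        ((fderiv ℝ φ x).comp
          (e.symm : EuclideanSpace ℝ (Fin d) →L[ℝ] EuclideanSpace ℝ (Fin d)))
        (x + t • V x) := by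
      apply HasFDerivAt.comp (x + t • V x) ?_ hSd
      rw [hSx]
      exact hφd.differentiableAt.hasFDerivAt
    -- adjoint of `u` is a unit with value `1 + t • A'`
    have hadj_u : ContinuousLinearMap.adjoint
        (u : EuclideanSpace ℝ (Fin d) →L[ℝ] EuclideanSpace ℝ (Fin d)) = 1 + t • A' := by
      rw [huval, map_add, map_smulₛₗ]
      simp only [starRingEnd_apply, star_trivial]
      congr 1
      rw [ContinuousLinearMap.one_def, ContinuousLinearMap.adjoint_id]
    have hmul1 : ((1 : EuclideanSpace ℝ (Fin d) →L[ℝ] EuclideanSpace ℝ (Fin d)) + t • A')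
        * ContinuousLinearMap.adjoint
          ((↑u⁻¹ : EuclideanSpace ℝ (Fin d) →L[ℝ] EuclideanSpace ℝ (Fin d))) = 1 := by
      rw [← hadj_u, ← ContinuousLinearMap.star_eq_adjoint, ← ContinuousLinearMap.star_eq_adjoint,
        ← star_mul, Units.inv_mul, star_one]
    have hmul2 : ContinuousLinearMap.adjoint
          ((↑u⁻¹ : EuclideanSpace ℝ (Fin d) →L[ℝ] EuclideanSpace ℝ (Fin d)))
        * ((1 : EuclideanSpace ℝ (Fin d) →L[ℝ] EuclideanSpace ℝ (Fin d)) + t • A') = 1 := by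
      rw [← hadj_u, ← ContinuousLinearMap.star_eq_adjoint, ← ContinuousLinearMap.star_eq_adjoint,
        ← star_mul, Units.mul_inv, star_one]
    set u' : (EuclideanSpace ℝ (Fin d) →L[ℝ] EuclideanSpace ℝ (Fin d))ˣ :=
      ⟨(1 : EuclideanSpace ℝ (Fin d) →L[ℝ] EuclideanSpace ℝ (Fin d)) + t • A',
        ContinuousLinearMap.adjoint
          ((↑u⁻¹ : EuclideanSpace ℝ (Fin d) →L[ℝ] EuclideanSpace ℝ (Fin d))),
        hmul1, hmul2⟩ with hu'
    have hRinv' : Ring.inverse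
        ((1 : EuclideanSpace ℝ (Fin d) →L[ℝ] EuclideanSpace ℝ (Fin d)) + t • A')
        = ContinuousLinearMap.adjoint
          ((↑u⁻¹ : EuclideanSpace ℝ (Fin d) →L[ℝ] EuclideanSpace ℝ (Fin d))) := by
      have : ((u' : (EuclideanSpace ℝ (Fin d) →L[ℝ] EuclideanSpace ℝ (Fin d))ˣ)
          : EuclideanSpace ℝ (Fin d) →L[ℝ] EuclideanSpace ℝ (Fin d))
          = (1 : EuclideanSpace ℝ (Fin d) →L[ℝ] EuclideanSpace ℝ (Fin d)) + t • A' := rfl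
      rw [← this, Ring.inverse_unit u']
      rfl
    -- the gradient of the transported function
    have hGrad : HasGradientAt (φ ∘ S t) (g t) (x + t • V x) := by
      rw [hasGradientAt_iff_hasFDerivAt]
      refine hcomp.congr_fderiv ?_
      symm
      apply ContinuousLinearMap.ext
      intro z
      rw [InnerProductSpace.toDual_apply_apply]
      have h1 : (e.symm : EuclideanSpace ℝ (Fin d) →L[ℝ] EuclideanSpace ℝ (Fin d))
          = (↑u⁻¹ : EuclideanSpace ℝ (Fin d) →L[ℝ] EuclideanSpace ℝ (Fin d)) := rfl
      have hgt : g t = ContinuousLinearMap.adjoint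
          ((↑u⁻¹ : EuclideanSpace ℝ (Fin d) →L[ℝ] EuclideanSpace ℝ (Fin d))) w := by
        show Ring.inverse ((1 : EuclideanSpace ℝ (Fin d) →L[ℝ] EuclideanSpace ℝ (Fin d))
          + t • A') w = _
        rw [hRinv']
      calc ⟪g t, z⟫
          = ⟪ContinuousLinearMap.adjoint
              ((↑u⁻¹ : EuclideanSpace ℝ (Fin d) →L[ℝ] EuclideanSpace ℝ (Fin d))) w, z⟫ := by
            rw [hgt]
        _ = ⟪w, (↑u⁻¹ : EuclideanSpace ℝ (Fin d) →L[ℝ] EuclideanSpace ℝ (Fin d)) z⟫ :=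
            ContinuousLinearMap.adjoint_inner_left _ _ _
        _ = fderiv ℝ φ x ((↑u⁻¹ : EuclideanSpace ℝ (Fin d) →L[ℝ] EuclideanSpace ℝ (Fin d)) z) :=
            InnerProductSpace.toDual_symm_apply
        _ = (fderiv ℝ φ x).comp
              (e.symm : EuclideanSpace ℝ (Fin d) →L[ℝ] EuclideanSpace ℝ (Fin d)) z := by
            rw [← h1]; rfl
    show ‖gradient (φ ∘ S t) (x + t • V x)‖⁻¹ • gradient (φ ∘ S t) (x + t • V x)
        = ‖g t‖⁻¹ • g t
    rw [hGrad.gradient]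
  -- ### Step B : derivative of `g`
  have hg0 : g 0 = w := by
    rw [hgdef]
    simp only [zero_smul, add_zero, Ring.inverse_one, ContinuousLinearMap.one_apply]
  have hgB : HasDerivAt g (-(A' w)) 0 := by
    have hc : HasDerivAt (fun t : ℝ =>
        (1 : EuclideanSpace ℝ (Fin d) →L[ℝ] EuclideanSpace ℝ (Fin d)) + t • A') A' 0 := by
      have := ((hasDerivAt_id (0 : ℝ)).smul_const A').const_add
        (1 : EuclideanSpace ℝ (Fin d) →L[ℝ] EuclideanSpace ℝ (Fin d))
      simpa [one_smul] using this
    have hc0 : (1 : EuclideanSpace ℝ (Fin d) →L[ℝ] EuclideanSpace ℝ (Fin d)) + (0 : ℝ) • A'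
        = ((1 : (EuclideanSpace ℝ (Fin d) →L[ℝ] EuclideanSpace ℝ (Fin d))ˣ)
          : EuclideanSpace ℝ (Fin d) →L[ℝ] EuclideanSpace ℝ (Fin d)) := by
      rw [zero_smul ℝ A', add_zero, Units.val_one]
    have hinv := hasFDerivAt_ringInverse (𝕜 := ℝ)
      (R := EuclideanSpace ℝ (Fin d) →L[ℝ] EuclideanSpace ℝ (Fin d)) 1
    have hinv2 := hc0.symm ▸ hinv
    have h2 := hinv2.comp_hasDerivAt 0 hc
    rw [zero_smul ℝ A', add_zero] at h2
    simp only [Function.comp_def, ContinuousLinearMap.mulLeftRight_apply,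
      ContinuousLinearMap.neg_apply, one_mul, mul_one] at h2
    have h3 := h2.clm_apply (hasDerivAt_const 0 w)
    simpa using h3
  -- ### Step C : derivative of the normalized curve
  have hg0ne : g 0 ≠ 0 := by rw [hg0]; exact hw
  have hC0 := hasDerivAt_normalize hgB hg0ne
  rw [hg0] at hC0
  -- ### Step D : the gradient of `f = ⟪V ·, nrm φ ·⟫`
  have hgradf : gradient (fun y => ⟪V y, nrm φ y⟫) x = ‖w‖⁻¹ • A' w := by
    have hG : ContDiff ℝ 1 (gradient φ) := by
      have h1 : ContDiff ℝ 1 (fderiv ℝ φ) := hφ.fderiv_right (by norm_num)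
      exact ((InnerProductSpace.toDual ℝ (EuclideanSpace ℝ (Fin d))).symm.contDiff).comp h1
    have hGd : Differentiable ℝ (gradient φ) := hG.differentiable one_ne_zero
    have hNd : DifferentiableAt ℝ (nrm φ) x := by
      show DifferentiableAt ℝ (fun y => ‖gradient φ y‖⁻¹ • gradient φ y) x
      refine DifferentiableAt.fun_smul ?_ hGd.differentiableAt
      exact ((hGd.differentiableAt.norm ℝ hw).inv hwn)
    set N' := fderiv ℝ (nrm φ) x with hN'
    have hev : (fun y => ⟪nrm φ y, nrm φ y⟫) =ᶠ[nhds x] fun _ => (1 : ℝ) := by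
      have hne : ∀ᶠ y in nhds x, gradient φ y ≠ 0 :=
        hGd.continuous.continuousAt.eventually_ne hw
      filter_upwards [hne] with y hy
      rw [nrm, real_inner_smul_left, real_inner_smul_right, real_inner_self_eq_norm_mul_norm]
      have : ‖gradient φ y‖ ≠ 0 := norm_ne_zero_iff.2 hy
      field_simp
    have horth : ∀ z, ⟪nrm φ x, N' z⟫ = 0 := by
      intro z
      have hsq : HasFDerivAt (fun y => ⟪nrm φ y, nrm φ y⟫)
          ((fderivInnerCLM ℝ (nrm φ x, nrm φ x)).comp (N'.prod N')) x :=
        (hNd.hasFDerivAt).inner ℝ (hNd.hasFDerivAt)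
      have hconst : HasFDerivAt (fun y => ⟪nrm φ y, nrm φ y⟫)
          (0 : EuclideanSpace ℝ (Fin d) →L[ℝ] ℝ) x :=
        (hasFDerivAt_const (1 : ℝ) x).congr_of_eventuallyEq hev
      have huniq := hsq.unique hconst
      have happ := congrArg (fun (Lm : EuclideanSpace ℝ (Fin d) →L[ℝ] ℝ) => Lm z) huniq
      simp only [ContinuousLinearMap.comp_apply, ContinuousLinearMap.zero_apply,
        fderivInnerCLM_apply, ContinuousLinearMap.prod_apply] at happ
      rw [real_inner_comm (nrm φ x) (N' z)] at happ
      linarith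
    have hf : HasFDerivAt (fun y => ⟪V y, nrm φ y⟫)
        ((fderivInnerCLM ℝ (V x, nrm φ x)).comp ((fderiv ℝ V x).prod N')) x :=
      (hVd.differentiableAt.hasFDerivAt).inner ℝ (hNd.hasFDerivAt)
    have hgr : HasGradientAt (fun y => ⟪V y, nrm φ y⟫) (‖w‖⁻¹ • A' w) x := by
      rw [hasGradientAt_iff_hasFDerivAt]
      refine hf.congr_fderiv ?_
      symm
      apply ContinuousLinearMap.ext
      intro z
      rw [InnerProductSpace.toDual_apply_apply]
      simp only [ContinuousLinearMap.comp_apply, fderivInnerCLM_apply,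
        ContinuousLinearMap.prod_apply]
      have h1 : ⟪V x, N' z⟫ = 0 := by
        rw [hVn x hx, real_inner_smul_left, horth z]; ring
      rw [h1, zero_add, show nrm φ x = ‖w‖⁻¹ • w from rfl, real_inner_smul_left,
        real_inner_smul_right, hA', ContinuousLinearMap.adjoint_inner_left,
        real_inner_comm ((fderiv ℝ V x) z) w]
    exact hgr.gradient
  -- ### Final assembly
  have hmain := hC0.congr_of_eventuallyEq hA_eq
  refine hmain.congr_deriv ?_
  symm
  rw [tgrad, hgradf, show nrm φ x = ‖w‖⁻¹ • w from rfl]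
  simp only [inner_neg_right, real_inner_smul_left, real_inner_smul_right]
  rw [real_inner_comm (A' w) w]
  match_scalars
  · ring
  · rw [← inv_pow]
    ring
end
end

section
/- Local shape derivative under a Dirichlet boundary condition: let Γ ⊂ ℝ^d be a hypersurface with unit normal n, V ∈ C_c¹(ℝ^d;ℝ^d), T_t(x) = x + tV(x), let w : (−δ,δ)×ℝ^d → ℝ be C¹ and w_D : ℝ^d → ℝ be C¹ (independent of t), and suppose w(t, T_t(x)) = w_D(T_t(x)) for all x ∈ Γ and all small t. Then the local shape derivative w' := ∂_t w(0,·) satisfies w'(x) = ∇(w_D − w(0,·))(x)·V(x) for all x ∈ Γ; in particular, if V = (V·n)n on Γ, then w' = (V·n) ∂(w_D − w(0,·))/∂n on Γ. -/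
open MeasureTheory RealInnerProductSpace

noncomputable section

/-- local shape derivative under a Dirichlet boundary condition.
Let `Γ ⊂ ℝ^d` be a hypersurface with unit normal `n`, `V ∈ C_c¹`, `T_t(x) = x + tV(x)`,
`w` a `C¹` family, `w_D` a `C¹` function independent of `t`, with `w(t,·) = w_D` on `T_t(Γ)`
for small `t`. Then the local shape derivative `w' = ∂_t w(0,·)` satisfies
`w' = ∇(w_D − w(0,·))·V` on `Γ`; in particular, if `V = (V·n)n` on `Γ`, then
`w' = (V·n) ∂(w_D − w(0,·))/∂n` on `Γ`. -/
theorem stmt_6 {d : ℕ} (Γ : Set (EuclideanSpace ℝ (Fin d)))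
    (n : EuclideanSpace ℝ (Fin d) → EuclideanSpace ℝ (Fin d))
    (hn : ∀ x ∈ Γ, ‖n x‖ = 1)
    (V : EuclideanSpace ℝ (Fin d) → EuclideanSpace ℝ (Fin d))
    (hV : ContDiff ℝ 1 V) (hVc : HasCompactSupport V)
    (δ : ℝ) (hδ : 0 < δ)
    (w : ℝ → EuclideanSpace ℝ (Fin d) → ℝ)
    (hw : ContDiffOn ℝ 1 (fun q : ℝ × EuclideanSpace ℝ (Fin d) => w q.1 q.2)
      (Set.Ioo (-δ) δ ×ˢ Set.univ))
    (wD : EuclideanSpace ℝ (Fin d) → ℝ) (hwD : ContDiff ℝ 1 wD)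
    (hbc : ∀ x ∈ Γ, ∀ t ∈ Set.Ioo (-δ) δ, w t (x + t • V x) = wD (x + t • V x)) :
    (∀ x ∈ Γ, deriv (fun t => w t x) 0
        = ⟪gradient (fun y => wD y - w 0 y) x, V x⟫) ∧
    ((∀ x ∈ Γ, V x = ⟪V x, n x⟫ • n x) →
      ∀ x ∈ Γ, deriv (fun t => w t x) 0
        = ⟪V x, n x⟫ * ⟪gradient (fun y => wD y - w 0 y) x, n x⟫) := by
  have key : ∀ x ∈ Γ, deriv (fun t => w t x) 0
      = ⟪gradient (fun y => wD y - w 0 y) x, V x⟫ := by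
    intro x hx
    have hmem : ((0 : ℝ), x) ∈ Set.Ioo (-δ) δ ×ˢ (Set.univ : Set (EuclideanSpace ℝ (Fin d))) :=
      ⟨⟨show -δ < (0:ℝ) by linarith, show (0:ℝ) < δ from hδ⟩, trivial⟩
    have hopen : IsOpen (Set.Ioo (-δ) δ ×ˢ (Set.univ : Set (EuclideanSpace ℝ (Fin d)))) :=
      isOpen_Ioo.prod isOpen_univ
    have hFdiff : DifferentiableAt ℝ (fun q : ℝ × EuclideanSpace ℝ (Fin d) => w q.1 q.2) (0, x) :=
      (hw.contDiffAt (hopen.mem_nhds hmem)).differentiableAt one_ne_zero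
    set L := fderiv ℝ (fun q : ℝ × EuclideanSpace ℝ (Fin d) => w q.1 q.2) (0, x) with hLdef
    have hFL : HasFDerivAt (fun q : ℝ × EuclideanSpace ℝ (Fin d) => w q.1 q.2) L ((0:ℝ), x) :=
      hFdiff.hasFDerivAt
    have h0 : x + (0:ℝ) • V x = x := by simp
    have hlin : HasDerivAt (fun t : ℝ => x + t • V x) (V x) 0 := by
      simpa using ((hasDerivAt_id (0:ℝ)).smul_const (V x)).const_add x
    have hcurve : HasDerivAt (fun t : ℝ => ((t, x + t • V x) : ℝ × EuclideanSpace ℝ (Fin d)))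
        (((1:ℝ), V x) : ℝ × EuclideanSpace ℝ (Fin d)) 0 :=
      (hasDerivAt_id 0).prodMk hlin
    have hcomp : HasDerivAt (fun t : ℝ => w t (x + t • V x)) (L ((1:ℝ), V x)) 0 := by
      have hFL' : HasFDerivAt (fun q : ℝ × EuclideanSpace ℝ (Fin d) => w q.1 q.2) L
          ((fun t : ℝ => ((t, x + t • V x) : ℝ × EuclideanSpace ℝ (Fin d))) 0) := by
        simpa [h0] using hFL
      exact hFL'.comp_hasDerivAt 0 hcurve
    have hwDc : HasDerivAt (fun t : ℝ => wD (x + t • V x)) (fderiv ℝ wD x (V x)) 0 := by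
      have hwd' : HasFDerivAt wD (fderiv ℝ wD x) ((fun t : ℝ => x + t • V x) 0) := by
        simpa [h0] using (hwD.differentiable one_ne_zero x).hasFDerivAt
      exact hwd'.comp_hasDerivAt 0 hlin
    have heq : (fun t : ℝ => w t (x + t • V x)) =ᶠ[nhds (0:ℝ)] (fun t : ℝ => wD (x + t • V x)) := by
      filter_upwards [Ioo_mem_nhds (by linarith : -δ < (0:ℝ)) hδ] with t ht
      exact hbc x hx t ht
    have hL1V : L ((1:ℝ), V x) = fderiv ℝ wD x (V x) :=
      (hcomp.congr_of_eventuallyEq heq.symm).unique hwDc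
    have hpart : HasDerivAt (fun t : ℝ => w t x) (L ((1:ℝ), (0 : EuclideanSpace ℝ (Fin d)))) 0 := by
      have hFL' : HasFDerivAt (fun q : ℝ × EuclideanSpace ℝ (Fin d) => w q.1 q.2) L
          ((fun t : ℝ => ((t, x) : ℝ × EuclideanSpace ℝ (Fin d))) 0) := hFL
      exact hFL'.comp_hasDerivAt 0 ((hasDerivAt_id (0:ℝ)).prodMk (hasDerivAt_const 0 x))
    have hsp : HasFDerivAt (fun y : EuclideanSpace ℝ (Fin d) => w 0 y)
        (L.comp (ContinuousLinearMap.inr ℝ ℝ (EuclideanSpace ℝ (Fin d)))) x := by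
      have hFL' : HasFDerivAt (fun q : ℝ × EuclideanSpace ℝ (Fin d) => w q.1 q.2) L
          ((fun y : EuclideanSpace ℝ (Fin d) => ((0, y) : ℝ × EuclideanSpace ℝ (Fin d))) x) := hFL
      have := hFL'.comp x ((hasFDerivAt_const (0:ℝ) x).prodMk (hasFDerivAt_id x))
      exact this
    have hdiffw0 : DifferentiableAt ℝ (fun y : EuclideanSpace ℝ (Fin d) => w 0 y) x :=
      hsp.differentiableAt
    have hsplit : L ((1:ℝ), V x) = L ((1:ℝ), (0 : EuclideanSpace ℝ (Fin d)))
        + L ((0:ℝ), V x) := by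
      rw [← map_add]; norm_num
    have hinner : ∀ (f : EuclideanSpace ℝ (Fin d) → ℝ) (v : EuclideanSpace ℝ (Fin d)),
        ⟪gradient f x, v⟫ = fderiv ℝ f x v := fun f v => InnerProductSpace.toDual_symm_apply
    rw [hpart.deriv, hinner]
    rw [fderiv_fun_sub (hwD.differentiable one_ne_zero x) hdiffw0]
    rw [hsp.fderiv]
    simp only [ContinuousLinearMap.sub_apply, ContinuousLinearMap.coe_comp', Function.comp_apply,
      ContinuousLinearMap.inr_apply]
    have hfin : L ((1:ℝ), (0 : EuclideanSpace ℝ (Fin d)))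
        = fderiv ℝ wD x (V x) - L ((0:ℝ), V x) := by
      rw [← hL1V, hsplit]; ring
    rw [hfin]
  refine ⟨key, fun hVn x hx => ?_⟩
  rw [key x hx]
  nth_rewrite 1 [hVn x hx]
  rw [real_inner_smul_right, real_inner_comm]


end
end

section
/- Local shape derivative under a Neumann boundary condition: let Γ = φ⁻¹(0) be a compact C² hypersurface in ℝ^d with unit normal n = ∇φ/|∇φ|, let V ∈ C_c²(ℝ^d;ℝ^d) satisfy V = (V·n)n on Γ, and let N(t,·) be a C¹ family of unit vector fields on a neighborhood of Γ with N(0,·)|_Γ = n, ‖N(t,x)‖ = 1, whose material derivative satisfies d/dt N(t,T_t(x))|_{t=0} = −∇_Γ(V·n)(x) on Γ. Let w : (−δ,δ)×ℝ^d → ℝ be C² jointly, let w_N : ℝ^d → ℝ be C¹ (independent of t), and suppose ∇w(t,·)·N(t,·) = w_N holds at T_t(x) for all x ∈ Γ and small t. Then the local shape derivative w' := ∂_t w(0,·) satisfies, on Γ, ∂w'/∂n = (V·n)[ ∂w_N/∂n − ∂²w/∂n² ] + ∇_Γ w · ∇_Γ(V·n), where ∂²w/∂n² = (D²w n)·n and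 w = w(0,·). -/
open MeasureTheory RealInnerProductSpace

noncomputable section

lemma inner_gradient_eq (f : EuclideanSpace ℝ (Fin d) → ℝ) (x v : EuclideanSpace ℝ (Fin d)) :
    ⟪gradient f x, v⟫ = fderiv ℝ f x v := by
  rw [gradient]; exact InnerProductSpace.toDual_symm_apply

def pairGrad (d : ℕ) : ((ℝ × EuclideanSpace ℝ (Fin d)) →L[ℝ] ℝ) →L[ℝ] EuclideanSpace ℝ (Fin d) :=
  ((InnerProductSpace.toDual ℝ
      (EuclideanSpace ℝ (Fin d))).symm.toContinuousLinearEquiv.toContinuousLinearMap).comp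
    ((ContinuousLinearMap.compL ℝ (EuclideanSpace ℝ (Fin d)) (ℝ × EuclideanSpace ℝ (Fin d)) ℝ).flip
      (ContinuousLinearMap.inr ℝ ℝ (EuclideanSpace ℝ (Fin d))))

lemma pairGrad_apply (B : (ℝ × EuclideanSpace ℝ (Fin d)) →L[ℝ] ℝ) :
    pairGrad d B = (InnerProductSpace.toDual ℝ (EuclideanSpace ℝ (Fin d))).symm
      (B.comp (ContinuousLinearMap.inr ℝ ℝ (EuclideanSpace ℝ (Fin d)))) := rfl

lemma inner_pairGrad (B : (ℝ × EuclideanSpace ℝ (Fin d)) →L[ℝ] ℝ) (u : EuclideanSpace ℝ (Fin d)) :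
    ⟪pairGrad d B, u⟫ = B (0, u) := by
  rw [pairGrad_apply, InnerProductSpace.toDual_symm_apply]; rfl


/-- local shape derivative under a Neumann boundary condition.
Let `Γ = φ⁻¹(0)` be a compact `C²` hypersurface with unit normal `n = ∇φ/|∇φ|`,
`V ∈ C_c²` with `V = (V·n)n` on `Γ`, and `N(t,·)` a `C¹` family of unit vector fields near `Γ`
with `N(0,·) = n` on `Γ`, whose material derivative is `−∇_Γ(V·n)` on `Γ`. Let `w` be a jointly
`C²` family and `w_N` a `C¹` function with `∇w(t,·)·N(t,·) = w_N` at `T_t(x)` for `x ∈ Γ` and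
small `t`. Then on `Γ`:
`∂w'/∂n = (V·n)(∂w_N/∂n − ∂²w/∂n²) + ∇_Γ w·∇_Γ(V·n)`, with `w = w(0,·)`. -/
theorem stmt_7 {d : ℕ} (φ : EuclideanSpace ℝ (Fin d) → ℝ) (hφ : ContDiff ℝ 2 φ)
    (hcpt : IsCompact (φ ⁻¹' {0}))
    (hgrad : ∀ x ∈ φ ⁻¹' {0}, gradient φ x ≠ 0)
    (V : EuclideanSpace ℝ (Fin d) → EuclideanSpace ℝ (Fin d))
    (hV : ContDiff ℝ 2 V) (hVc : HasCompactSupport V)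
    (hVn : ∀ x ∈ φ ⁻¹' {0}, V x = ⟪V x, nrm φ x⟫ • nrm φ x)
    (δ : ℝ) (hδ : 0 < δ)
    (U : Set (EuclideanSpace ℝ (Fin d))) (hU : IsOpen U) (hΓU : φ ⁻¹' {0} ⊆ U)
    (N : ℝ → EuclideanSpace ℝ (Fin d) → EuclideanSpace ℝ (Fin d))
    (hN : ContDiffOn ℝ 1 (fun q : ℝ × EuclideanSpace ℝ (Fin d) => N q.1 q.2)
      (Set.Ioo (-δ) δ ×ˢ U))
    (hN0 : ∀ x ∈ φ ⁻¹' {0}, N 0 x = nrm φ x)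
    (hNunit : ∀ t ∈ Set.Ioo (-δ) δ, ∀ x ∈ U, ‖N t x‖ = 1)
    (hNmat : ∀ x ∈ φ ⁻¹' {0},
      HasDerivAt (fun t => N t (x + t • V x))
        (-(tgrad (nrm φ) (fun y => ⟪V y, nrm φ y⟫) x)) 0)
    (w : ℝ → EuclideanSpace ℝ (Fin d) → ℝ)
    (hw : ContDiffOn ℝ 2 (fun q : ℝ × EuclideanSpace ℝ (Fin d) => w q.1 q.2)
      (Set.Ioo (-δ) δ ×ˢ Set.univ))
    (wN : EuclideanSpace ℝ (Fin d) → ℝ) (hwN : ContDiff ℝ 1 wN)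
    (hbc : ∀ x ∈ φ ⁻¹' {0}, ∀ t ∈ Set.Ioo (-δ) δ,
      ⟪gradient (w t) (x + t • V x), N t (x + t • V x)⟫ = wN (x + t • V x)) :
    ∀ x ∈ φ ⁻¹' {0},
      ⟪gradient (fun y => deriv (fun t => w t y) 0) x, nrm φ x⟫
        = ⟪V x, nrm φ x⟫ *
            (⟪gradient wN x, nrm φ x⟫
              - ⟪fderiv ℝ (fun y => gradient (w 0) y) x (nrm φ x), nrm φ x⟫)
          + ⟪tgrad (nrm φ) (w 0) x, tgrad (nrm φ) (fun y => ⟪V y, nrm φ y⟫) x⟫ := by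
  intro x hx
  set n : EuclideanSpace ℝ (Fin d) := nrm φ x with hn_def
  have hgx : gradient φ x ≠ 0 := hgrad x hx
  have hn1 : ‖n‖ = 1 := by
    rw [hn_def, nrm, norm_smul, norm_inv, norm_norm,
      inv_mul_cancel₀ (norm_ne_zero_iff.mpr hgx)]
  set c : ℝ := ⟪V x, n⟫ with hc_def
  have hVx : V x = c • n := hVn x hx
  set W : ℝ × EuclideanSpace ℝ (Fin d) → ℝ := fun q => w q.1 q.2 with hW_def
  set ι := ContinuousLinearMap.inr ℝ ℝ (EuclideanSpace ℝ (Fin d)) with hι_def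
  have hopen : IsOpen (Set.Ioo (-δ) δ ×ˢ (Set.univ : Set (EuclideanSpace ℝ (Fin d)))) := isOpen_Ioo.prod isOpen_univ
  have h0δ : (0:ℝ) ∈ Set.Ioo (-δ) δ := ⟨neg_lt_zero.mpr hδ, hδ⟩
  have hWc : ∀ t ∈ Set.Ioo (-δ) δ, ∀ y : EuclideanSpace ℝ (Fin d), ContDiffAt ℝ 2 W (t, y) := fun t ht y =>
    hw.contDiffAt (hopen.mem_nhds ⟨ht, trivial⟩)
  have hWd : ∀ t ∈ Set.Ioo (-δ) δ, ∀ y : EuclideanSpace ℝ (Fin d), DifferentiableAt ℝ W (t, y) := fun t ht y =>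
    (hWc t ht y).differentiableAt (by norm_num)
  have hslice : ∀ t ∈ Set.Ioo (-δ) δ, ∀ y : EuclideanSpace ℝ (Fin d),
      HasFDerivAt (w t) ((fderiv ℝ W (t, y)).comp ι) y := fun t ht y =>
    ((hWd t ht y).hasFDerivAt).comp y (hasFDerivAt_prodMk_right t y)
  have hinner_slice : ∀ t ∈ Set.Ioo (-δ) δ, ∀ y u : EuclideanSpace ℝ (Fin d),
      ⟪gradient (w t) y, u⟫ = fderiv ℝ W (t, y) (0, u) := by
    intro t ht y u
    rw [inner_gradient_eq, (hslice t ht y).fderiv]; rfl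
  have htime : ∀ y : EuclideanSpace ℝ (Fin d), HasDerivAt (fun t => w t y) (fderiv ℝ W (0, y) (1, 0)) 0 := fun y =>
    ((hWd 0 h0δ y).hasFDerivAt).comp_hasDerivAt (f := fun t : ℝ => ((t, y) : ℝ × EuclideanSpace ℝ (Fin d))) (0:ℝ)
      ((hasDerivAt_id (0:ℝ)).prodMk (hasDerivAt_const (0:ℝ) y))
  have hγ0 : x + (0:ℝ) • V x = x := by simp
  have hγ : HasDerivAt (fun t : ℝ => x + t • V x) (V x) 0 := by
    simpa using ((hasDerivAt_id (0:ℝ)).smul_const (V x)).const_add x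
  have hp : HasDerivAt (fun t : ℝ => ((t, x + t • V x) : ℝ × EuclideanSpace ℝ (Fin d))) ((1:ℝ), V x) 0 :=
    (hasDerivAt_id 0).prodMk hγ
  set S := fderiv ℝ (fderiv ℝ W) (0, x) with hS_def
  have hS : HasFDerivAt (fderiv ℝ W) S (0, x) :=
    (((hWc 0 h0δ x).fderiv_right (m := 1) (le_refl 2)).differentiableAt one_ne_zero).hasFDerivAt
  have hsym : ∀ u v : ℝ × EuclideanSpace ℝ (Fin d), S u v = S v u := (hWc 0 h0δ x).isSymmSndFDerivAt (by simp)
  have hS' : HasFDerivAt (fderiv ℝ W) S (0, x + (0:ℝ) • V x) := by rw [hγ0]; exact hS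
  have hB : HasDerivAt (fun t => fderiv ℝ W (t, x + t • V x)) (S (1, V x)) 0 :=
    hS'.comp_hasDerivAt 0 hp
  set T : EuclideanSpace ℝ (Fin d) := tgrad (nrm φ) (fun y => ⟪V y, nrm φ y⟫) x with hT_def
  have hM : HasDerivAt (fun t => N t (x + t • V x)) (-T) 0 := hNmat x hx
  have hv : HasDerivAt (fun t => (((0:ℝ), N t (x + t • V x)) : ℝ × EuclideanSpace ℝ (Fin d))) (((0:ℝ), -T) : ℝ × EuclideanSpace ℝ (Fin d)) 0 :=
    (hasDerivAt_const 0 (0:ℝ)).prodMk hM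
  have hwNd : HasFDerivAt wN (fderiv ℝ wN x) (x + (0:ℝ) • V x) := by
    rw [hγ0]; exact (hwN.differentiable one_ne_zero x).hasFDerivAt
  have hwNc : HasDerivAt (fun t : ℝ => wN (x + t • V x)) (fderiv ℝ wN x (V x)) 0 := by
    exact hwNd.comp_hasDerivAt (x := (0:ℝ)) hγ
  set F : ℝ → ℝ := fun t => fderiv ℝ W (t, x + t • V x) (0, N t (x + t • V x))
    - wN (x + t • V x) with hF_def
  have hF : HasDerivAt F
      (S (1, V x) (0, n) + fderiv ℝ W (0, x) ((0:ℝ), -T) - fderiv ℝ wN x (V x)) 0 := by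
    have := (hB.clm_apply hv).sub hwNc
    simp [hγ0, hN0 x hx, ← hn_def] at this; exact this
  have hFzero : HasDerivAt F 0 0 := by
    apply (hasDerivAt_const (0:ℝ) (0:ℝ)).congr_of_eventuallyEq
    filter_upwards [Ioo_mem_nhds (neg_lt_zero.mpr hδ) hδ] with t ht
    have h1 := hinner_slice t ht (x + t • V x) (N t (x + t • V x))
    have h2 := hbc x hx t ht
    simp only [hF_def, ← h1, h2, sub_self]
  have key : S (1, V x) (0, n) + fderiv ℝ W (0, x) ((0:ℝ), -T) - fderiv ℝ wN x (V x) = 0 :=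
    hF.unique hFzero
  -- identification of the pieces
  have hA : HasFDerivAt (fun y : EuclideanSpace ℝ (Fin d) => fderiv ℝ W (0, y)) (S.comp ι) x :=
    hS.comp x (hasFDerivAt_prodMk_right (0:ℝ) x)
  -- (1) LHS
  have hw'eq : (fun y : EuclideanSpace ℝ (Fin d) => deriv (fun t => w t y) 0)
      = fun y : EuclideanSpace ℝ (Fin d) => fderiv ℝ W (0, y) ((1:ℝ), (0:EuclideanSpace ℝ (Fin d))) := funext fun y => (htime y).deriv
  have hw'd : HasFDerivAt (fun y : EuclideanSpace ℝ (Fin d) => deriv (fun t => w t y) 0)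
      ((fderiv ℝ W (0, x)).comp (0 : EuclideanSpace ℝ (Fin d) →L[ℝ] ℝ × EuclideanSpace ℝ (Fin d)) + (S.comp ι).flip ((1:ℝ), (0:EuclideanSpace ℝ (Fin d)))) x := by
    rw [hw'eq]; exact hA.clm_apply (hasFDerivAt_const ((1:ℝ), (0:EuclideanSpace ℝ (Fin d))) x)
  have hLHS : ⟪gradient (fun y : EuclideanSpace ℝ (Fin d) => deriv (fun t => w t y) 0) x, n⟫ = S (0, n) (1, 0) := by
    rw [inner_gradient_eq, hw'd.fderiv]; simp [hι_def]
  -- (2) fderiv of gradient field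
  have hg0eq : (fun y : EuclideanSpace ℝ (Fin d) => gradient (w 0) y) = fun y : EuclideanSpace ℝ (Fin d) => pairGrad d (fderiv ℝ W (0, y)) := by
    funext y
    rw [pairGrad_apply, gradient, (hslice 0 h0δ y).fderiv]
  have hg0d : HasFDerivAt (fun y : EuclideanSpace ℝ (Fin d) => gradient (w 0) y) ((pairGrad d).comp (S.comp ι)) x := by
    rw [hg0eq]; exact ((pairGrad d).hasFDerivAt).comp x hA
  have h2nd : ⟪fderiv ℝ (fun y : EuclideanSpace ℝ (Fin d) => gradient (w 0) y) x n, n⟫ = S (0, n) (0, n) := by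
    rw [hg0d.fderiv]
    simp only [ContinuousLinearMap.comp_apply]
    rw [inner_pairGrad]; rfl
  -- (3)
  have h3 : fderiv ℝ W (0, x) ((0:ℝ), -T) = -⟪gradient (w 0) x, T⟫ := by
    rw [← hinner_slice 0 h0δ x (-T), inner_neg_right]
  -- (4)
  have h4 : fderiv ℝ wN x (V x) = c * ⟪gradient wN x, n⟫ := by
    rw [← inner_gradient_eq, hVx, real_inner_smul_right]
  -- (6) decomposition
  have h6 : S (1, V x) (0, n) = S (1, 0) (0, n) + c * S (0, n) (0, n) := by
    have hdec : ((1:ℝ), V x) = ((1:ℝ), (0:EuclideanSpace ℝ (Fin d))) + c • (((0:ℝ), n) : ℝ × EuclideanSpace ℝ (Fin d)) := by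
      rw [hVx]; simp [Prod.ext_iff]
    rw [hdec, map_add, _root_.map_smul]
    simp
  -- (5) tgrad inner product
  have hTn : ⟪n, T⟫ = 0 := by
    rw [hT_def, tgrad, inner_sub_right, real_inner_smul_right, ← hn_def,
      real_inner_self_eq_norm_sq, hn1, real_inner_comm]
    ring
  have h5 : ⟪tgrad (nrm φ) (w 0) x, T⟫ = ⟪gradient (w 0) x, T⟫ := by
    rw [tgrad, inner_sub_left, real_inner_smul_left, ← hn_def, hTn]
    ring
  -- conclude
  have hsym1 : S (1, 0) (0, n) = S (0, n) (1, 0) := hsym _ _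
  rw [hLHS, h2nd, h5, ← hsym1]
  have hkey := key
  rw [h6, h3, h4] at hkey
  linarith

end
end
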